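/- (One-shot mutual covering lemma.) Fix a joint distribution P_{UV} on U × V with marginals P_U, P_V, and suppose P_{V|U=u} is absolutely continuous with respect to P_V for P_U-a.e. u, with information density ı_{U;V}(u;v) = log (dP_{V|U=u}/dP_V)(v). Let U₁,…,U_M be i.i.d. P_U and V₁,…,V_L be i.i.d. P_V, with all M + L variables mutually independent. Then for every measurable set F ⊆ U × V and all δ, γ > 0: P[∩_{m=1}^{M} ∩_{l=1}^{L} {(U_m,V_l) ∉ F}] ≤ P[(U,V) ∉ F] + P[exp(ı_{U;V}(U;V)) > M·L·exp(−γ) − δ] + (min{M,L} − 1)/δ + exp(−exp(γ)), where (U,V) ∼ P_{UV}. -/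

import Mathlib

open MeasureTheory ProbabilityTheory
open scoped ENNReal

open MeasureTheory ProbabilityTheory Set
open scoped ENNReal

lemma my_real_chain (L : ℕ) (γ a x : ℝ) (ha0 : 0 ≤ a) (ha1 : a ≤ 1)
    (hx0 : 0 ≤ x) (hx1 : x ≤ 1) (hx : Real.exp γ / L * a ≤ x) (hL : 0 < L) :
    (1 - x) ^ L ≤ 1 - a + Real.exp (-Real.exp γ) := by
  have h1 : (1 - x) ^ L ≤ Real.exp (-x) ^ L := by
    apply pow_le_pow_left₀ (by linarith)
    nlinarith [Real.add_one_le_exp (-x)]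
  have h2 : Real.exp (-x) ^ L = Real.exp (-(L * x)) := by
    rw [← Real.exp_nat_mul]; ring_nf
  have h3 : Real.exp (-(L * x)) ≤ Real.exp (-(Real.exp γ * a)) := by
    apply Real.exp_le_exp.2
    have : Real.exp γ * a ≤ L * x := by
      have hL' : (0:ℝ) < L := by exact_mod_cast hL
      calc Real.exp γ * a = L * (Real.exp γ / L * a) := by field_simp
        _ ≤ L * x := by apply mul_le_mul_of_nonneg_left hx (le_of_lt hL')
    linarith
  have h4 : Real.exp (-(Real.exp γ * a)) ≤ 1 - a + Real.exp (-Real.exp γ) := by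
    have hc := convexOn_exp.2 (mem_univ (0:ℝ)) (mem_univ (-Real.exp γ)) (by linarith : 0 ≤ 1 - a) ha0 (by ring)
    simp only [smul_eq_mul, mul_zero, zero_add, Real.exp_zero, mul_one] at hc
    have : Real.exp (-(Real.exp γ * a)) = Real.exp ((1-a) * 0 + a * (-Real.exp γ)) := by ring_nf
    rw [this]
    calc Real.exp ((1-a) * 0 + a * (-Real.exp γ)) ≤ (1-a) * 1 + a * Real.exp (-Real.exp γ) := by
          simpa using hc
      _ ≤ 1 - a + Real.exp (-Real.exp γ) := by
          nlinarith [Real.exp_pos (-Real.exp γ)]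
  linarith

lemma my_pi_map_eval {ι : Type*} [Fintype ι] {α : Type*} [MeasurableSpace α]
    (μ : Measure α) [IsProbabilityMeasure μ] (j : ι) :
    (Measure.pi fun _ : ι => μ).map (Function.eval j) = μ := by
  classical
  ext s hs
  rw [Measure.map_apply (measurable_pi_apply j) hs]
  have h1 : Function.eval j ⁻¹' s = Set.pi univ (Function.update (fun _ : ι => (univ : Set α)) j s) := by
    rw [Set.eval_preimage]
  rw [h1, Measure.pi_pi]
  have h2 : ∀ k, μ (Function.update (fun _ : ι => (univ : Set α)) j s k)
      = if k = j then μ s else 1 := by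
    intro k
    rw [Function.update_apply]
    split <;> simp
  simp_rw [h2]
  simp

lemma my_lintegral_eval {ι : Type*} [Fintype ι] {α : Type*} [MeasurableSpace α]
    (μ : Measure α) [IsProbabilityMeasure μ] (j : ι) (f : α → ℝ≥0∞) (hf : Measurable f) :
    ∫⁻ x, f (x j) ∂(Measure.pi fun _ : ι => μ) = ∫⁻ x, f x ∂μ := by
  rw [← lintegral_map hf (measurable_pi_apply j), my_pi_map_eval]

lemma my_ae_eval {ι : Type*} [Fintype ι] {α : Type*} [MeasurableSpace α]
    (μ : Measure α) [IsProbabilityMeasure μ] (j : ι) {p : α → Prop}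
    (hp : ∀ᵐ x ∂μ, p x) : ∀ᵐ x ∂(Measure.pi fun _ : ι => μ), p (x j) :=
  (Measure.tendsto_eval_ae_ae).eventually hp

lemma my_lintegral_pair {α : Type*} [MeasurableSpace α] (μ : Measure α)
    [IsProbabilityMeasure μ] {n : ℕ} {m m' : Fin n} (hne : m' ≠ m)
    (f g : α → ℝ≥0∞) (hf : Measurable f) (hg : Measurable g) :
    ∫⁻ u, f (u m) * g (u m') ∂(Measure.pi fun _ : Fin n => μ)
      = (∫⁻ x, f x ∂μ) * ∫⁻ x, g x ∂μ := by
  classical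
  have hmp := MeasureTheory.measurePreserving_piEquivPiSubtypeProd
    (fun _ : Fin n => μ) (fun j => j = m)
  have key := hmp.lintegral_map_equiv
    (fun q : ((∀ _ : {j : Fin n // j = m}, α) × (∀ _ : {j : Fin n // ¬ j = m}, α)) =>
      f (q.1 ⟨m, rfl⟩) * g (q.2 ⟨m', hne⟩))
    (MeasurableEquiv.piEquivPiSubtypeProd (fun _ : Fin n => α) (fun j => j = m))
  have h0 : (∫⁻ a, (fun q : ((∀ _ : {j : Fin n // j = m}, α) × (∀ _ : {j : Fin n // ¬ j = m}, α)) =>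
      f (q.1 ⟨m, rfl⟩) * g (q.2 ⟨m', hne⟩))
        ((MeasurableEquiv.piEquivPiSubtypeProd (fun _ : Fin n => α) (fun j => j = m)) a)
        ∂(Measure.pi fun _ : Fin n => μ))
      = ∫⁻ u, f (u m) * g (u m') ∂(Measure.pi fun _ : Fin n => μ) := rfl
  rw [h0] at key
  rw [← key]
  rw [lintegral_prod_mul (f := fun y : (∀ _ : {j : Fin n // j = m}, α) => f (y ⟨m, rfl⟩))
    (g := fun z : (∀ _ : {j : Fin n // ¬ j = m}, α) => g (z ⟨m', hne⟩))
    ((hf.comp (measurable_pi_apply _)).aemeasurable)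
    ((hg.comp (measurable_pi_apply _)).aemeasurable)]
  rw [@my_lintegral_eval {j : Fin n // j = m} (Subtype.fintype _) α _ μ _ ⟨m, rfl⟩ f hf,
    @my_lintegral_eval {j : Fin n // ¬ j = m} (Subtype.fintype _) α _ μ _ ⟨m', hne⟩ g hg]

lemma my_meas_S {𝓤 𝓥 : Type*} [MeasurableSpace 𝓤] [MeasurableSpace 𝓥]
    {F : Set (𝓤 × 𝓥)} (hF : MeasurableSet F) (M L : ℕ) :
    MeasurableSet {p : (Fin M → 𝓤) × (Fin L → 𝓥) | ∀ m l, (p.1 m, p.2 l) ∉ F} := by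
  have : {p : (Fin M → 𝓤) × (Fin L → 𝓥) | ∀ m l, (p.1 m, p.2 l) ∉ F}
      = ⋂ m, ⋂ l, (fun p : (Fin M → 𝓤) × (Fin L → 𝓥) => (p.1 m, p.2 l)) ⁻¹' Fᶜ := by
    ext p; simp
  rw [this]
  exact MeasurableSet.iInter fun m => MeasurableSet.iInter fun l =>
    hF.compl.preimage
      (((measurable_pi_apply m).comp measurable_fst).prodMk
        ((measurable_pi_apply l).comp measurable_snd))

lemma my_aux {𝓤 𝓥 : Type*} [MeasurableSpace 𝓤] [MeasurableSpace 𝓥]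
    (μU : Measure 𝓤) (μV : Measure 𝓥) [IsProbabilityMeasure μU] [IsProbabilityMeasure μV]
    (e : 𝓤 × 𝓥 → ℝ≥0∞) (he : Measurable e)
    (hU : ∀ᵐ u ∂μU, ∫⁻ v, e (u, v) ∂μV = 1)
    (hV : ∀ᵐ v ∂μV, ∫⁻ u, e (u, v) ∂μU = 1)
    (F : Set (𝓤 × 𝓥)) (hF : MeasurableSet F)
    (M L : ℕ) (hM : 0 < M) (hL : 0 < L)
    (δ γ : ℝ) (hδ : 0 < δ) (hγ : 0 < γ)
    (hT : 0 < (M : ℝ) * L * Real.exp (-γ) - δ) :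
    (Measure.pi fun _ : Fin M => μU).prod (Measure.pi fun _ : Fin L => μV)
        {p | ∀ m l, (p.1 m, p.2 l) ∉ F}
      ≤ ((μU.prod μV).withDensity e) Fᶜ
        + ((μU.prod μV).withDensity e) {p | ENNReal.ofReal ((M : ℝ) * L * Real.exp (-γ) - δ) < e p}
        + ENNReal.ofReal (((M : ℝ) - 1) / δ) + ENNReal.ofReal (Real.exp (-Real.exp γ)) := by
  classical
  set ν := (μU.prod μV).withDensity e with hν
  set cT : ℝ≥0∞ := ENNReal.ofReal ((M : ℝ) * L * Real.exp (-γ) - δ) with hcT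
  set c : ℝ≥0∞ := ENNReal.ofReal ((M : ℝ) * L * Real.exp (-γ)) with hc
  set δ' : ℝ≥0∞ := ENNReal.ofReal δ with hδ'
  set Tset : Set (𝓤 × 𝓥) := {p | cT < e p} with hTsetdef
  set Dset : (Fin M → 𝓤) → Set 𝓥 := fun u => {v0 | ∃ m, (u m, v0) ∈ F} with hDsetdef
  set Sf : (Fin M → 𝓤) → 𝓥 → ℝ≥0∞ := fun u v0 => ∑ m, e (u m, v0) with hSfdef
  set D' : (Fin M → 𝓤) → Set 𝓥 := fun u => Dset u ∩ {v0 | Sf u v0 ≤ c} with hD'def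
  set W : Fin M → Set ((Fin M → 𝓤) × 𝓥) :=
    fun m => {q | δ' ≤ ∑ m' ∈ Finset.univ.erase m, e (q.1 m', q.2)} with hWdef
  -- measurability facts
  have hsec : ∀ u0 : 𝓤, Measurable (fun v0 => e (u0, v0)) :=
    fun u0 => he.comp measurable_prodMk_left
  have hDset : ∀ u, MeasurableSet (Dset u) := by
    intro u
    have : Dset u = ⋃ m, (fun v0 => (u m, v0)) ⁻¹' F := by
      ext v0; simp [hDsetdef]
    rw [this]
    exact MeasurableSet.iUnion fun m => hF.preimage measurable_prodMk_left
  have hSfm : ∀ u, Measurable (Sf u) :=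
    fun u => Finset.measurable_sum _ fun m _ => hsec (u m)
  have hD' : ∀ u, MeasurableSet (D' u) :=
    fun u => (hDset u).inter (measurableSet_le (hSfm u) measurable_const)
  have hTset : MeasurableSet Tset := measurableSet_lt measurable_const he
  have hWm : ∀ m, MeasurableSet (W m) := by
    intro m
    exact measurableSet_le measurable_const
      (Finset.measurable_sum _ fun m' _ =>
        he.comp (((measurable_pi_apply m').comp measurable_fst).prodMk measurable_snd))
  have hem : ∀ m : Fin M, Measurable (fun q : (Fin M → 𝓤) × 𝓥 => e (q.1 m, q.2)) :=
    fun m => he.comp (((measurable_pi_apply m).comp measurable_fst).prodMk measurable_snd)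
  -- the three bounding functions
  set φ1 : 𝓤 → ℝ≥0∞ := fun x => ∫⁻ v0, Fᶜ.indicator e (x, v0) ∂μV with hφ1def
  set φ2 : 𝓤 → ℝ≥0∞ := fun x => ∫⁻ v0, Tset.indicator e (x, v0) ∂μV with hφ2def
  set B3 : Fin M → (Fin M → 𝓤) → ℝ≥0∞ :=
    fun m u => ∫⁻ v0, (W m).indicator (fun q => e (q.1 m, q.2)) (u, v0) ∂μV with hB3def
  have hφ1m : Measurable φ1 := (he.indicator hF.compl).lintegral_prod_right'
  have hφ2m : Measurable φ2 := (he.indicator hTset).lintegral_prod_right'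
  have hB3m : ∀ m, Measurable (B3 m) :=
    fun m => ((hem m).indicator (hWm m)).lintegral_prod_right'
  have hMne : (M : ℝ≥0∞) ≠ 0 := by exact_mod_cast Nat.pos_iff_ne_zero.mp hM
  have hMfin : (M : ℝ≥0∞) ≠ ∞ := ENNReal.natCast_ne_top M
  have hδ'0 : δ' ≠ 0 := by
    simp [hδ', ENNReal.ofReal_pos, hδ, ne_of_gt]
  have hδ'top : δ' ≠ ∞ := ENNReal.ofReal_ne_top
  -- Step A : rewrite the LHS
  have hS : MeasurableSet {p : (Fin M → 𝓤) × (Fin L → 𝓥) | ∀ m l, (p.1 m, p.2 l) ∉ F} := by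
    have : {p : (Fin M → 𝓤) × (Fin L → 𝓥) | ∀ m l, (p.1 m, p.2 l) ∉ F}
        = ⋂ m, ⋂ l, (fun p : (Fin M → 𝓤) × (Fin L → 𝓥) => (p.1 m, p.2 l)) ⁻¹' Fᶜ := by
      ext p; simp
    rw [this]
    exact MeasurableSet.iInter fun m => MeasurableSet.iInter fun l =>
      hF.compl.preimage
        (((measurable_pi_apply m).comp measurable_fst).prodMk
          ((measurable_pi_apply l).comp measurable_snd))
  have stepA : (Measure.pi fun _ : Fin M => μU).prod (Measure.pi fun _ : Fin L => μV)
      {p | ∀ m l, (p.1 m, p.2 l) ∉ F}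
      = ∫⁻ u, μV ((Dset u)ᶜ) ^ L ∂(Measure.pi fun _ : Fin M => μU) := by
    rw [Measure.prod_apply hS]
    apply lintegral_congr
    intro u
    have h1 : (Prod.mk u ⁻¹' {p : (Fin M → 𝓤) × (Fin L → 𝓥) | ∀ m l, (p.1 m, p.2 l) ∉ F})
        = Set.pi univ (fun _ : Fin L => (Dset u)ᶜ) := by
      ext v; simp [hDsetdef]; tauto
    rw [h1, Measure.pi_pi]
    simp
  -- Step B : pointwise a.e. bound
  have hgood : ∀ᵐ u ∂(Measure.pi fun _ : Fin M => μU), ∀ m, ∫⁻ v, e (u m, v) ∂μV = 1 :=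
    ae_all_iff.2 fun m => my_ae_eval μU m hU
  have stepB : ∀ᵐ u ∂(Measure.pi fun _ : Fin M => μU),
      μV ((Dset u)ᶜ) ^ L ≤ (M : ℝ≥0∞)⁻¹
        * ∑ m, (φ1 (u m) + φ2 (u m) + B3 m u)
        + ENNReal.ofReal (Real.exp (-Real.exp γ)) := by
    filter_upwards [hgood] with u hu
    set t : Fin M → ℝ≥0∞ := fun m => ∫⁻ v0 in D' u, e (u m, v0) ∂μV with htdef
    have ht_le : ∀ m, t m ≤ 1 := by
      intro m
      calc t m ≤ ∫⁻ v0, e (u m, v0) ∂μV := setLIntegral_le_lintegral _ _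
        _ = 1 := hu m
    have ht_fin : ∀ m, t m ≠ ∞ := fun m => ne_top_of_le_ne_top ENNReal.one_ne_top (ht_le m)
    -- the complement integral
    have key1 : ∀ m, ∫⁻ v0, ((D' u)ᶜ).indicator (fun v0 => e (u m, v0)) v0 ∂μV = 1 - t m := by
      intro m
      rw [lintegral_indicator (hD' u).compl]
      have h := lintegral_add_compl (μ := μV) (fun v0 => e (u m, v0)) (hD' u)
      rw [hu m] at h
      have h2 : (∫⁻ v0 in (D' u)ᶜ, e (u m, v0) ∂μV) + t m = 1 := by
        rw [add_comm]; exact h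
      exact ENNReal.eq_sub_of_add_eq (ht_fin m) h2
    -- pointwise indicator inequality
    have key2 : ∀ m, ∀ v0 : 𝓥, ((D' u)ᶜ).indicator (fun v0 => e (u m, v0)) v0
        ≤ Fᶜ.indicator e (u m, v0) + Tset.indicator e (u m, v0)
          + (W m).indicator (fun q => e (q.1 m, q.2)) (u, v0) := by
      intro m v0
      by_cases hv : v0 ∈ (D' u)ᶜ
      · rw [indicator_of_mem hv]
        have hv' : v0 ∉ Dset u ∨ ¬ (Sf u v0 ≤ c) := by
          rcases not_and_or.mp hv with h | h
          · exact Or.inl h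
          · exact Or.inr h
        rcases hv' with h | h
        · have hmem : (u m, v0) ∈ Fᶜ := fun hc => h ⟨m, hc⟩
          rw [indicator_of_mem hmem]
          exact le_add_right (le_add_right le_rfl)
        · push_neg at h
          by_cases h2 : (u m, v0) ∈ Tset
          · rw [indicator_of_mem h2]
            exact le_add_right (le_add_left le_rfl)
          · -- e (u m, v0) ≤ cT, so the erased sum must be ≥ δ'
            have hecT : e (u m, v0) ≤ cT := le_of_not_gt h2
            have hWmem : (u, v0) ∈ W m := by
              by_contra hno
              have hlt : ∑ m' ∈ Finset.univ.erase m, e (u m', v0) < δ' := lt_of_not_ge hno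
              have hsplit : Sf u v0 = e (u m, v0) + ∑ m' ∈ Finset.univ.erase m, e (u m', v0) := by
                rw [hSfdef]
                exact (Finset.add_sum_erase _ _ (Finset.mem_univ m)).symm
              have hcc : Sf u v0 < cT + δ' := by
                rw [hsplit]
                exact ENNReal.add_lt_add_of_le_of_lt (ne_top_of_le_ne_top ENNReal.ofReal_ne_top hecT) hecT hlt
              have hceq : cT + δ' = c := by
                rw [hcT, hδ', hc, ← ENNReal.ofReal_add (le_of_lt hT) (le_of_lt hδ)]
                ring_nf
              rw [hceq] at hcc
              exact absurd hcc (lt_asymm h)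
            calc e (u m, v0) = (W m).indicator (fun q => e (q.1 m, q.2)) (u, v0) := by
                  rw [indicator_of_mem hWmem]
              _ ≤ _ := le_add_left le_rfl
      · rw [indicator_of_notMem hv]
        exact zero_le
    -- reduce to the complement-integral bound
    have key3 : ∀ m, 1 - t m ≤ φ1 (u m) + φ2 (u m) + B3 m u := by
      intro m
      rw [← key1 m]
      calc ∫⁻ v0, ((D' u)ᶜ).indicator (fun v0 => e (u m, v0)) v0 ∂μV
          ≤ ∫⁻ v0, (Fᶜ.indicator e (u m, v0) + Tset.indicator e (u m, v0)
            + (W m).indicator (fun q => e (q.1 m, q.2)) (u, v0)) ∂μV :=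
            lintegral_mono (key2 m)
        _ = φ1 (u m) + φ2 (u m) + B3 m u := by
            rw [lintegral_add_right _
                (show Measurable fun v0 : 𝓥 => (W m).indicator (fun q => e (q.1 m, q.2)) (u, v0) from
                  ((hem m).indicator (hWm m)).comp measurable_prodMk_left),
              lintegral_add_right _
                (show Measurable fun v0 : 𝓥 => Tset.indicator e (u m, v0) from
                  (he.indicator hTset).comp measurable_prodMk_left)]
    have main : μV ((Dset u)ᶜ) ^ L ≤ (M : ℝ≥0∞)⁻¹ * ∑ m, (1 - t m)
        + ENNReal.ofReal (Real.exp (-Real.exp γ)) := by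
      have hMR : (0:ℝ) < M := Nat.cast_pos.2 hM
      have hLR : (0:ℝ) < L := Nat.cast_pos.2 hL
      have hτ0 : ∀ m : Fin M, 0 ≤ (t m).toReal := fun m => ENNReal.toReal_nonneg
      have hτ1 : ∀ m : Fin M, (t m).toReal ≤ 1 := fun m => by
        simpa using ENNReal.toReal_mono ENNReal.one_ne_top (ht_le m)
      have hx0 : (0:ℝ) ≤ (μV (D' u)).toReal := ENNReal.toReal_nonneg
      have hx1 : (μV (D' u)).toReal ≤ 1 := by
        simpa using ENNReal.toReal_mono ENNReal.one_ne_top (prob_le_one (μ := μV) (s := D' u))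
      have ha0 : (0:ℝ) ≤ (M:ℝ)⁻¹ * ∑ m, (t m).toReal := by positivity
      have ha1 : (M:ℝ)⁻¹ * ∑ m, (t m).toReal ≤ 1 := by
        have hsum1 : ∑ m : Fin M, (t m).toReal ≤ (M:ℝ) := by
          calc ∑ m : Fin M, (t m).toReal ≤ ∑ _m : Fin M, (1:ℝ) :=
                Finset.sum_le_sum fun m _ => hτ1 m
            _ = (M:ℝ) := by simp
        rw [inv_mul_le_iff₀ hMR, mul_one]
        exact hsum1
      -- the sum bound : ∑ t ≤ c * μV (D' u)
      have hsum : ∑ m, t m = ∫⁻ v0 in D' u, Sf u v0 ∂μV := by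
        simp only [hSfdef, htdef]
        exact (lintegral_finset_sum _ (fun m _ => hsec (u m))).symm
      have hsum_le : ∑ m, t m ≤ c * μV (D' u) := by
        rw [hsum]
        calc ∫⁻ v0 in D' u, Sf u v0 ∂μV ≤ ∫⁻ _ in D' u, c ∂μV :=
              setLIntegral_mono measurable_const (fun v0 hv0 => hv0.2)
          _ = c * μV (D' u) := setLIntegral_const _ _
      have hcfin : c * μV (D' u) ≠ ∞ :=
        ENNReal.mul_ne_top ENNReal.ofReal_ne_top (measure_ne_top _ _)
      have h2 : (∑ m, t m).toReal ≤ (M:ℝ) * L * Real.exp (-γ) * (μV (D' u)).toReal := by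
        have h3 := ENNReal.toReal_mono hcfin hsum_le
        rwa [ENNReal.toReal_mul, hc, ENNReal.toReal_ofReal (by positivity)] at h3
      have hx : Real.exp γ / L * ((M:ℝ)⁻¹ * ∑ m, (t m).toReal) ≤ (μV (D' u)).toReal := by
        rw [← ENNReal.toReal_sum (fun (m : Fin M) _ => ht_fin m)]
        have hgexp : Real.exp γ = (Real.exp (-γ))⁻¹ := by rw [Real.exp_neg, inv_inv]
        calc Real.exp γ / L * ((M:ℝ)⁻¹ * (∑ m, t m).toReal)
            ≤ Real.exp γ / L * ((M:ℝ)⁻¹ * ((M:ℝ) * L * Real.exp (-γ) * (μV (D' u)).toReal)) := by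
              apply mul_le_mul_of_nonneg_left
                (mul_le_mul_of_nonneg_left h2 (by positivity)) (by positivity)
          _ = (μV (D' u)).toReal := by
              rw [hgexp]
              have hEne : Real.exp (-γ) ≠ 0 := ne_of_gt (Real.exp_pos _)
              field_simp
      have hreal := my_real_chain L γ ((M:ℝ)⁻¹ * ∑ m, (t m).toReal) ((μV (D' u)).toReal)
        ha0 ha1 hx0 hx1 hx hL
      have hcompl : μV ((Dset u)ᶜ) ≤ ENNReal.ofReal (1 - (μV (D' u)).toReal) := by
        rw [prob_compl_eq_one_sub (hDset u)]
        have hmono : μV (D' u) ≤ μV (Dset u) := measure_mono inter_subset_left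
        calc 1 - μV (Dset u) ≤ 1 - μV (D' u) := tsub_le_tsub_left hmono 1
          _ = ENNReal.ofReal (1 - (μV (D' u)).toReal) := by
            rw [ENNReal.ofReal_sub _ ENNReal.toReal_nonneg, ENNReal.ofReal_one,
              ENNReal.ofReal_toReal (measure_ne_top _ _)]
      have hpow : μV ((Dset u)ᶜ) ^ L ≤ ENNReal.ofReal ((1 - (μV (D' u)).toReal) ^ L) := by
        rw [ENNReal.ofReal_pow (by linarith)]
        exact pow_le_pow_left' hcompl L
      have hrhs : (M : ℝ≥0∞)⁻¹ * ∑ m, (1 - t m)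
          = ENNReal.ofReal (1 - (M:ℝ)⁻¹ * ∑ m, (t m).toReal) := by
        have h1 : ∀ m : Fin M, (1 : ℝ≥0∞) - t m = ENNReal.ofReal (1 - (t m).toReal) := by
          intro m
          rw [ENNReal.ofReal_sub _ (hτ0 m), ENNReal.ofReal_one,
            ENNReal.ofReal_toReal (ht_fin m)]
        rw [Finset.sum_congr rfl (fun m _ => h1 m),
          ← ENNReal.ofReal_sum_of_nonneg (fun m _ => by linarith [hτ1 m])]
        rw [show ((M:ℝ≥0∞))⁻¹ = ENNReal.ofReal (M:ℝ)⁻¹ by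
          rw [ENNReal.ofReal_inv_of_pos hMR, ENNReal.ofReal_natCast]]
        rw [← ENNReal.ofReal_mul (by positivity)]
        congr 1
        rw [Finset.sum_sub_distrib, Finset.sum_const, Finset.card_univ, Fintype.card_fin]
        push_cast
        field_simp
        rw [nsmul_eq_mul, mul_one]
      calc μV ((Dset u)ᶜ) ^ L ≤ ENNReal.ofReal ((1 - (μV (D' u)).toReal) ^ L) := hpow
        _ ≤ ENNReal.ofReal ((1 - (M:ℝ)⁻¹ * ∑ m, (t m).toReal) + Real.exp (-Real.exp γ)) :=
            ENNReal.ofReal_le_ofReal hreal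
        _ = ENNReal.ofReal (1 - (M:ℝ)⁻¹ * ∑ m, (t m).toReal)
            + ENNReal.ofReal (Real.exp (-Real.exp γ)) :=
            ENNReal.ofReal_add (by linarith) (Real.exp_nonneg _)
        _ = (M : ℝ≥0∞)⁻¹ * ∑ m, (1 - t m) + ENNReal.ofReal (Real.exp (-Real.exp γ)) := by
            rw [hrhs]
    refine le_trans main (add_le_add_left (mul_le_mul_right (Finset.sum_le_sum fun m _ => key3 m) _) _)
  -- Step D : integrate everything
  have hν1 : ∫⁻ x, φ1 x ∂μU = ν Fᶜ := by
    rw [hν, withDensity_apply e hF.compl, ← lintegral_indicator hF.compl e,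
      lintegral_prod _ ((he.indicator hF.compl).aemeasurable)]
  have hν2 : ∫⁻ x, φ2 x ∂μU = ν Tset := by
    rw [hν, withDensity_apply e hTset, ← lintegral_indicator hTset e,
      lintegral_prod _ ((he.indicator hTset).aemeasurable)]
  have hIB1 : ∀ m : Fin M, ∫⁻ u, φ1 (u m) ∂(Measure.pi fun _ : Fin M => μU) = ν Fᶜ :=
    fun m => by rw [my_lintegral_eval μU m φ1 hφ1m, hν1]
  have hIB2 : ∀ m : Fin M, ∫⁻ u, φ2 (u m) ∂(Measure.pi fun _ : Fin M => μU) = ν Tset :=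
    fun m => by rw [my_lintegral_eval μU m φ2 hφ2m, hν2]
  have hIB3 : ∀ m : Fin M, ∫⁻ u, B3 m u ∂(Measure.pi fun _ : Fin M => μU)
      ≤ δ'⁻¹ * ((M - 1 : ℕ) : ℝ≥0∞) := by
    intro m
    have hpt : ∀ (u : Fin M → 𝓤) (v0 : 𝓥),
        (W m).indicator (fun q => e (q.1 m, q.2)) (u, v0)
          ≤ δ'⁻¹ * ∑ m' ∈ Finset.univ.erase m, (e (u m', v0) * e (u m, v0)) := by
      intro u v0
      by_cases hq : (u, v0) ∈ W m
      · rw [indicator_of_mem hq]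
        have h1 : (1:ℝ≥0∞) ≤ δ'⁻¹ * ∑ m' ∈ Finset.univ.erase m, e (u m', v0) := by
          calc (1:ℝ≥0∞) = δ'⁻¹ * δ' := (ENNReal.inv_mul_cancel hδ'0 hδ'top).symm
            _ ≤ δ'⁻¹ * ∑ m' ∈ Finset.univ.erase m, e (u m', v0) := mul_le_mul_right hq _
        calc e (u m, v0) = 1 * e (u m, v0) := (one_mul _).symm
          _ ≤ (δ'⁻¹ * ∑ m' ∈ Finset.univ.erase m, e (u m', v0)) * e (u m, v0) :=
              mul_le_mul_left h1 _
          _ = δ'⁻¹ * ∑ m' ∈ Finset.univ.erase m, (e (u m', v0) * e (u m, v0)) := by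
              rw [mul_assoc, Finset.sum_mul]
      · rw [indicator_of_notMem hq]; exact zero_le
    have hmeasJ : ∀ m' : Fin M,
        Measurable fun u : Fin M → 𝓤 => ∫⁻ v0, e (u m', v0) * e (u m, v0) ∂μV :=
      fun m' => ((hem m').mul (hem m)).lintegral_prod_right'
    have hJ : ∀ m' ∈ Finset.univ.erase m,
        ∫⁻ u, ∫⁻ v0, e (u m', v0) * e (u m, v0) ∂μV ∂(Measure.pi fun _ : Fin M => μU) = 1 := by
      intro m' hm'
      have hne : m' ≠ m := Finset.ne_of_mem_erase hm'
      rw [lintegral_lintegral_swap (((hem m').mul (hem m)).aemeasurable)]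
      have hae : ∀ᵐ v0 ∂μV,
          ∫⁻ u, e (u m', v0) * e (u m, v0) ∂(Measure.pi fun _ : Fin M => μU) = 1 := by
        filter_upwards [hV] with v0 hv0
        rw [my_lintegral_pair μU hne.symm (fun x => e (x, v0)) (fun x => e (x, v0))
          (he.comp (measurable_id.prodMk measurable_const))
          (he.comp (measurable_id.prodMk measurable_const)), hv0, one_mul]
      rw [lintegral_congr_ae hae, lintegral_one, measure_univ]
    calc ∫⁻ u, B3 m u ∂(Measure.pi fun _ : Fin M => μU)
        ≤ ∫⁻ u, ∫⁻ v0, δ'⁻¹ * ∑ m' ∈ Finset.univ.erase m, (e (u m', v0) * e (u m, v0)) ∂μV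
            ∂(Measure.pi fun _ : Fin M => μU) :=
          lintegral_mono fun u => lintegral_mono fun v0 => hpt u v0
      _ = ∫⁻ u, δ'⁻¹ * ∫⁻ v0, ∑ m' ∈ Finset.univ.erase m, (e (u m', v0) * e (u m, v0)) ∂μV
            ∂(Measure.pi fun _ : Fin M => μU) := by
          apply lintegral_congr; intro u
          exact lintegral_const_mul' _ _ (ENNReal.inv_ne_top.2 hδ'0)
      _ = δ'⁻¹ * ∫⁻ u, ∫⁻ v0, ∑ m' ∈ Finset.univ.erase m, (e (u m', v0) * e (u m, v0)) ∂μV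
            ∂(Measure.pi fun _ : Fin M => μU) :=
          lintegral_const_mul' _ _ (ENNReal.inv_ne_top.2 hδ'0)
      _ = δ'⁻¹ * ∫⁻ u, ∑ m' ∈ Finset.univ.erase m, ∫⁻ v0, e (u m', v0) * e (u m, v0) ∂μV
            ∂(Measure.pi fun _ : Fin M => μU) := by
          congr 1; apply lintegral_congr; intro u
          exact lintegral_finset_sum _ (fun m' _ => ((hsec (u m')).mul (hsec (u m))))
      _ = δ'⁻¹ * ∑ m' ∈ Finset.univ.erase m,
            ∫⁻ u, ∫⁻ v0, e (u m', v0) * e (u m, v0) ∂μV ∂(Measure.pi fun _ : Fin M => μU) := by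
          congr 1
          exact lintegral_finset_sum _ (fun m' _ => hmeasJ m')
      _ = δ'⁻¹ * ∑ m' ∈ Finset.univ.erase m, (1:ℝ≥0∞) := by
          rw [Finset.sum_congr rfl hJ]
      _ = δ'⁻¹ * ((M - 1 : ℕ) : ℝ≥0∞) := by
          rw [Finset.sum_const, Finset.card_erase_of_mem (Finset.mem_univ m),
            Finset.card_univ, Fintype.card_fin, nsmul_eq_mul, mul_one]
  -- combine
  rw [stepA]
  calc ∫⁻ u, μV ((Dset u)ᶜ) ^ L ∂(Measure.pi fun _ : Fin M => μU)
      ≤ ∫⁻ u, ((M : ℝ≥0∞)⁻¹ * ∑ m, (φ1 (u m) + φ2 (u m) + B3 m u)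
          + ENNReal.ofReal (Real.exp (-Real.exp γ))) ∂(Measure.pi fun _ : Fin M => μU) :=
        lintegral_mono_ae stepB
    _ = (M : ℝ≥0∞)⁻¹ * ∑ m, ∫⁻ u, (φ1 (u m) + φ2 (u m) + B3 m u)
          ∂(Measure.pi fun _ : Fin M => μU)
          + ENNReal.ofReal (Real.exp (-Real.exp γ)) := by
        rw [lintegral_add_right _ measurable_const, lintegral_const, measure_univ, mul_one,
          lintegral_const_mul' _ _ (ENNReal.inv_ne_top.2 hMne)]
        congr 2
        exact lintegral_finset_sum _ (fun m _ =>
          ((hφ1m.comp (measurable_pi_apply m)).add (hφ2m.comp (measurable_pi_apply m))).add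
            (hB3m m))
    _ ≤ (M : ℝ≥0∞)⁻¹ * ∑ _m : Fin M, (ν Fᶜ + ν Tset + δ'⁻¹ * ((M - 1 : ℕ) : ℝ≥0∞))
          + ENNReal.ofReal (Real.exp (-Real.exp γ)) := by
        refine add_le_add_left (mul_le_mul_right (Finset.sum_le_sum fun m _ => ?_) _) _
        rw [lintegral_add_right _ (hB3m m),
          lintegral_add_right _
            (show Measurable fun u : Fin M → 𝓤 => φ2 (u m) from
              hφ2m.comp (measurable_pi_apply m))]
        exact add_le_add (add_le_add (le_of_eq (hIB1 m)) (le_of_eq (hIB2 m))) (hIB3 m)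
    _ = ν Fᶜ + ν Tset + δ'⁻¹ * ((M - 1 : ℕ) : ℝ≥0∞)
          + ENNReal.ofReal (Real.exp (-Real.exp γ)) := by
        rw [Finset.sum_const, Finset.card_univ, Fintype.card_fin, nsmul_eq_mul, ← mul_assoc,
          ENNReal.inv_mul_cancel hMne hMfin, one_mul]
    _ ≤ ν Fᶜ + ν Tset + ENNReal.ofReal (((M : ℝ) - 1) / δ)
          + ENNReal.ofReal (Real.exp (-Real.exp γ)) := by
        refine add_le_add_left (add_le_add_right (le_of_eq ?_) _) _
        have hcast : ((M - 1 : ℕ) : ℝ) = (M : ℝ) - 1 := by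
          push_cast [Nat.cast_sub hM]
          ring
        rw [ENNReal.ofReal_div_of_pos hδ, ← hcast, ENNReal.ofReal_natCast, ← hδ',
          div_eq_mul_inv, mul_comm]

/-- One-shot mutual covering lemma (Lemma 1). `U₁,…,U_M` i.i.d. `P_U`, `V₁,…,V_L`
i.i.d. `P_V`, all independent; `ı_{U;V}` is the information density, i.e.
`exp ∘ i (u, ·)` is the density of `P_{V|U=u}` w.r.t. `P_V`. Then for every
measurable `F` and `δ, γ > 0`:
`P[∩ₘ∩ₗ {(Uₘ,Vₗ) ∉ F}] ≤ P[(U,V) ∉ F] + P[exp ı > ML e^{-γ} - δ] + (min{M,L}-1)/δ + e^{-e^γ}`. -/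
theorem one_shot_mutual_covering
    {Ω 𝓤 𝓥 : Type*} [MeasurableSpace Ω] [MeasurableSpace 𝓤] [MeasurableSpace 𝓥]
    (P : Measure Ω) [IsProbabilityMeasure P]
    (μUV : Measure (𝓤 × 𝓥)) [IsProbabilityMeasure μUV]
    (μU : Measure 𝓤) (μV : Measure 𝓥)
    [IsProbabilityMeasure μU] [IsProbabilityMeasure μV]
    (hμU : μUV.map Prod.fst = μU) (hμV : μUV.map Prod.snd = μV)
    (κ : Kernel 𝓤 𝓥) [IsMarkovKernel κ]
    (hjoint : μUV = μU ⊗ₘ κ)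
    (i : 𝓤 × 𝓥 → ℝ) (hi : Measurable i)
    (hdens : ∀ᵐ u ∂μU, κ u = μV.withDensity (fun v => ENNReal.ofReal (Real.exp (i (u, v)))))
    (M L : ℕ) (hM : 0 < M) (hL : 0 < L)
    (Um : Fin M → Ω → 𝓤) (Vl : Fin L → Ω → 𝓥)
    (hUm : ∀ m, Measurable (Um m)) (hVl : ∀ l, Measurable (Vl l))
    (hlaw : P.map (fun ω => ((fun m => Um m ω), (fun l => Vl l ω)))
      = (Measure.pi fun _ : Fin M => μU).prod (Measure.pi fun _ : Fin L => μV))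
    (F : Set (𝓤 × 𝓥)) (hF : MeasurableSet F)
    (δ γ : ℝ) (hδ : 0 < δ) (hγ : 0 < γ) :
    (P {ω | ∀ m l, (Um m ω, Vl l ω) ∉ F}).toReal
      ≤ (μUV Fᶜ).toReal
        + (μUV {p | Real.exp (i p) > (M : ℝ) * (L : ℝ) * Real.exp (-γ) - δ}).toReal
        + (min (M : ℝ) (L : ℝ) - 1) / δ
        + Real.exp (-Real.exp γ) := by
    classical
  have hM1 : (1:ℝ) ≤ (M:ℝ) := by exact_mod_cast hM
  have hL1 : (1:ℝ) ≤ (L:ℝ) := by exact_mod_cast hL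
  by_cases hT : 0 < (M : ℝ) * L * Real.exp (-γ) - δ
  · -- main case
    set e : 𝓤 × 𝓥 → ℝ≥0∞ := fun p => ENNReal.ofReal (Real.exp (i p)) with hedef
    have he : Measurable e := ENNReal.measurable_ofReal.comp (Real.measurable_exp.comp hi)
    have hν : μUV = (μU.prod μV).withDensity e := by
      ext s hs
      rw [hjoint, Measure.compProd_apply hs, withDensity_apply e hs, ← lintegral_indicator hs e,
        lintegral_prod _ ((he.indicator hs).aemeasurable)]
      apply lintegral_congr_ae
      filter_upwards [hdens] with u hu
      rw [hu, withDensity_apply _ (measurable_prodMk_left hs),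
        ← lintegral_indicator (measurable_prodMk_left hs)]
      apply lintegral_congr
      intro v
      by_cases hv : (u, v) ∈ s
      · rw [Set.indicator_of_mem (show v ∈ Prod.mk u ⁻¹' s from hv), Set.indicator_of_mem hv]
      · rw [Set.indicator_of_notMem (show v ∉ Prod.mk u ⁻¹' s from hv),
          Set.indicator_of_notMem hv]
    have hU' : ∀ᵐ u ∂μU, ∫⁻ v, e (u, v) ∂μV = 1 := by
      filter_upwards [hdens] with u hu
      have h1 : κ u Set.univ = 1 := measure_univ
      rw [hu, withDensity_apply _ MeasurableSet.univ, Measure.restrict_univ] at h1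
      exact h1
    have hmv : Measurable fun v => ∫⁻ u, e (u, v) ∂μU := he.lintegral_prod_left'
    have hV' : ∀ᵐ v ∂μV, ∫⁻ u, e (u, v) ∂μU = 1 := by
      refine ae_eq_of_forall_setLIntegral_eq_of_sigmaFinite (μ := μV) hmv measurable_const ?_
      intro s hs _
      have h1 : ∫⁻ _ in s, (1:ℝ≥0∞) ∂μV = μV s := by simp
      rw [h1]
      have h2 : μUV (Prod.snd ⁻¹' s) = μV s := by
        rw [← hμV, Measure.map_apply measurable_snd hs]
      rw [← h2, hν, withDensity_apply e (measurable_snd hs),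
        ← lintegral_indicator (measurable_snd hs) e,
        lintegral_prod_symm _ ((he.indicator (measurable_snd hs)).aemeasurable),
        ← lintegral_indicator hs (fun v => ∫⁻ u, e (u, v) ∂μU)]
      apply lintegral_congr
      intro v
      by_cases hv : v ∈ s
      · rw [Set.indicator_of_mem hv]
        apply lintegral_congr
        intro u
        rw [Set.indicator_of_mem (show (u, v) ∈ Prod.snd ⁻¹' s from hv)]
      · rw [Set.indicator_of_notMem hv]
        simp only [show ∀ u, (Prod.snd ⁻¹' s).indicator e (u, v) = 0 from fun u =>
          Set.indicator_of_notMem (show (u, v) ∉ Prod.snd ⁻¹' s from hv) e]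
        simp
    -- rewrite the LHS
    have hfmeas : Measurable fun ω => ((fun m => Um m ω), (fun l => Vl l ω)) :=
      (measurable_pi_lambda _ fun m => hUm m).prodMk (measurable_pi_lambda _ fun l => hVl l)
    have hLHS : P {ω | ∀ m l, (Um m ω, Vl l ω) ∉ F}
        = (Measure.pi fun _ : Fin M => μU).prod (Measure.pi fun _ : Fin L => μV)
            {p | ∀ m l, (p.1 m, p.2 l) ∉ F} := by
      rw [← hlaw, Measure.map_apply hfmeas (my_meas_S hF M L)]
      congr 1
    rw [hLHS]
    -- finiteness bookkeeping
    have f1 : μUV Fᶜ ≠ ∞ := measure_ne_top _ _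
    have f2 : μUV {p | Real.exp (i p) > (M : ℝ) * (L : ℝ) * Real.exp (-γ) - δ} ≠ ∞ :=
      measure_ne_top _ _
    rcases le_total M L with hML | hLM
    · -- M ≤ L : use my_aux directly
      have key := my_aux μU μV e he hU' hV' F hF M L hM hL δ γ hδ hγ hT
      rw [← hν] at key
      have hsets : {p : 𝓤 × 𝓥 | ENNReal.ofReal ((M:ℝ) * L * Real.exp (-γ) - δ) < e p}
          = {p : 𝓤 × 𝓥 | Real.exp (i p) > (M : ℝ) * (L : ℝ) * Real.exp (-γ) - δ} := by
        ext p
        simp only [Set.mem_setOf_eq, hedef, gt_iff_lt]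
        exact ENNReal.ofReal_lt_ofReal_iff (Real.exp_pos _)
      rw [hsets] at key
      have f3 : ENNReal.ofReal (((M:ℝ) - 1) / δ) ≠ ∞ := ENNReal.ofReal_ne_top
      have f4 : ENNReal.ofReal (Real.exp (-Real.exp γ)) ≠ ∞ := ENNReal.ofReal_ne_top
      have hfin := ENNReal.add_ne_top.2
        ⟨ENNReal.add_ne_top.2 ⟨ENNReal.add_ne_top.2 ⟨f1, f2⟩, f3⟩, f4⟩
      have h5 := ENNReal.toReal_mono hfin key
      rw [ENNReal.toReal_add (ENNReal.add_ne_top.2 ⟨ENNReal.add_ne_top.2 ⟨f1, f2⟩, f3⟩) f4,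
        ENNReal.toReal_add (ENNReal.add_ne_top.2 ⟨f1, f2⟩) f3,
        ENNReal.toReal_add f1 f2,
        ENNReal.toReal_ofReal (div_nonneg (by linarith) hδ.le),
        ENNReal.toReal_ofReal (Real.exp_nonneg _)] at h5
      have hmin : min (M:ℝ) (L:ℝ) = (M:ℝ) := min_eq_left (by exact_mod_cast hML)
      rw [hmin]
      exact h5
    · -- L ≤ M : apply my_aux with the roles of 𝓤 and 𝓥 swapped
      set e' : 𝓥 × 𝓤 → ℝ≥0∞ := fun q => e (q.2, q.1) with he'def
      have he' : Measurable e' := he.comp (measurable_snd.prodMk measurable_fst)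
      have hT' : 0 < (L:ℝ) * M * Real.exp (-γ) - δ := by
        have : (L:ℝ) * M = (M:ℝ) * L := by ring
        linarith
      have hU'' : ∀ᵐ v ∂μV, ∫⁻ u, e' (v, u) ∂μU = 1 := hV'
      have hV'' : ∀ᵐ u ∂μU, ∫⁻ v, e' (v, u) ∂μV = 1 := hU'
      have key := my_aux μV μU e' he' hU'' hV'' (Prod.swap ⁻¹' F)
        (hF.preimage measurable_swap) L M hL hM δ γ hδ hγ hT'
      -- transfer the density measure
      have hν'app : ∀ A : Set (𝓥 × 𝓤), MeasurableSet A →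
          ((μV.prod μU).withDensity e') A = μUV (Prod.swap ⁻¹' A) := by
        intro A hA
        rw [withDensity_apply _ hA, ← lintegral_indicator hA e',
          show (μV.prod μU) = (μU.prod μV).map Prod.swap from (Measure.prod_swap).symm,
          lintegral_map (he'.indicator hA) measurable_swap, hν,
          withDensity_apply _ (hA.preimage measurable_swap),
          ← lintegral_indicator (hA.preimage measurable_swap) e]
        apply lintegral_congr
        intro p
        by_cases hp : p ∈ Prod.swap ⁻¹' A
        · rw [Set.indicator_of_mem hp, Set.indicator_of_mem (show Prod.swap p ∈ A from hp)]
          rfl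
        · rw [Set.indicator_of_notMem hp]
          rw [Set.indicator_of_notMem (show Prod.swap p ∉ A from hp)]
      -- transfer each term of key
      have hFswap : ((μV.prod μU).withDensity e') (Prod.swap ⁻¹' F)ᶜ = μUV Fᶜ := by
        rw [hν'app _ (hF.preimage measurable_swap).compl]
        have hsetF : Prod.swap ⁻¹' (Prod.swap ⁻¹' F)ᶜ = Fᶜ := by
          ext p; simp
        rw [hsetF]
      have hTswap : ((μV.prod μU).withDensity e')
            {q : 𝓥 × 𝓤 | ENNReal.ofReal ((L:ℝ) * M * Real.exp (-γ) - δ) < e' q}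
          = μUV {p | Real.exp (i p) > (M : ℝ) * (L : ℝ) * Real.exp (-γ) - δ} := by
        rw [hν'app _ (measurableSet_lt measurable_const he')]
        congr 1
        ext p
        simp only [Set.mem_preimage, Set.mem_setOf_eq, gt_iff_lt]
        rw [show (L:ℝ) * M = (M:ℝ) * L from by ring]
        exact ENNReal.ofReal_lt_ofReal_iff (Real.exp_pos _)
      have hSswap : (Measure.pi fun _ : Fin L => μV).prod (Measure.pi fun _ : Fin M => μU)
            {p : (Fin L → 𝓥) × (Fin M → 𝓤) | ∀ l m', (p.1 l, p.2 m') ∉ Prod.swap ⁻¹' F}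
          = (Measure.pi fun _ : Fin M => μU).prod (Measure.pi fun _ : Fin L => μV)
            {p : (Fin M → 𝓤) × (Fin L → 𝓥) | ∀ m l, (p.1 m, p.2 l) ∉ F} := by
        rw [show (Measure.pi fun _ : Fin L => μV).prod (Measure.pi fun _ : Fin M => μU)
            = ((Measure.pi fun _ : Fin M => μU).prod
                (Measure.pi fun _ : Fin L => μV)).map Prod.swap from (Measure.prod_swap).symm,
          Measure.map_apply measurable_swap (my_meas_S (hF.preimage measurable_swap) L M)]
        congr 1
        ext p
        simp only [Set.mem_preimage, Set.mem_setOf_eq, Prod.fst_swap, Prod.snd_swap]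
        tauto
      rw [hSswap, hFswap, hTswap] at key
      have f3 : ENNReal.ofReal (((L:ℝ) - 1) / δ) ≠ ∞ := ENNReal.ofReal_ne_top
      have f4 : ENNReal.ofReal (Real.exp (-Real.exp γ)) ≠ ∞ := ENNReal.ofReal_ne_top
      have hfin := ENNReal.add_ne_top.2
        ⟨ENNReal.add_ne_top.2 ⟨ENNReal.add_ne_top.2 ⟨f1, f2⟩, f3⟩, f4⟩
      have h5 := ENNReal.toReal_mono hfin key
      rw [ENNReal.toReal_add (ENNReal.add_ne_top.2 ⟨ENNReal.add_ne_top.2 ⟨f1, f2⟩, f3⟩) f4,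
        ENNReal.toReal_add (ENNReal.add_ne_top.2 ⟨f1, f2⟩) f3,
        ENNReal.toReal_add f1 f2,
        ENNReal.toReal_ofReal (div_nonneg (by linarith) hδ.le),
        ENNReal.toReal_ofReal (Real.exp_nonneg _)] at h5
      have hmin : min (M:ℝ) (L:ℝ) = (L:ℝ) := min_eq_right (by exact_mod_cast hLM)
      rw [hmin]
      exact h5
  · -- trivial case : the threshold is nonpositive
    have hset : {p : 𝓤 × 𝓥 | Real.exp (i p) > (M : ℝ) * (L : ℝ) * Real.exp (-γ) - δ}
        = Set.univ := by
      ext p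
      simp only [Set.mem_setOf_eq, Set.mem_univ, iff_true, gt_iff_lt]
      push_neg at hT
      have := Real.exp_pos (i p)
      linarith
    rw [hset]
    simp only [measure_univ, ENNReal.toReal_one]
    have h1 : (P {ω | ∀ m l, (Um m ω, Vl l ω) ∉ F}).toReal ≤ 1 := by
      simpa using ENNReal.toReal_mono ENNReal.one_ne_top
        (prob_le_one (μ := P) (s := {ω | ∀ m l, (Um m ω, Vl l ω) ∉ F}))
    have h2 : (0:ℝ) ≤ (μUV Fᶜ).toReal := ENNReal.toReal_nonneg
    have h3 : (0:ℝ) ≤ (min (M:ℝ) (L:ℝ) - 1) / δ := by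
      apply div_nonneg _ hδ.le
      have : (1:ℝ) ≤ min (M:ℝ) (L:ℝ) := le_min hM1 hL1
      linarith
    have h4 := Real.exp_nonneg (-Real.exp γ)
    linarith
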